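/- Let X ⊂ P^3 be the Fermat quintic defined by x_0^5 + x_1^5 + x_2^5 + x_3^5 = 0, let D_1 be the line {x_0 + x_1 = x_2 + x_3 = 0} and D_2 the line {x_0 + x_2 = x_1 + ωx_3 = 0} where ω is a primitive 5th root of unity. Then D_1 and D_2 are contained in X, are disjoint (D_1.D_2 = 0), and each meets the hyperplane section C = X ∩ {x_1^5 + x_2^5 + x_3^5 = 0 as a hyperplane section class} in degree 1; hence D = D_1 + D_2 is not 1-connected. -/

import Mathlib

open Projectivization

/-- Points of `ℙ³` over `ℂ`. -/
abbrev P3 := Projectivization ℂ (Fin 4 → ℂ)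

/-- The Fermat quintic surface `x₀⁵ + x₁⁵ + x₂⁵ + x₃⁵ = 0` in `ℙ³`. -/
def fermatQuintic : Set P3 :=
  {p | (p.rep 0) ^ 5 + (p.rep 1) ^ 5 + (p.rep 2) ^ 5 + (p.rep 3) ^ 5 = 0}

/-- The line `D₁ = {x₀ + x₁ = x₂ + x₃ = 0}`. -/
def lineD1 : Set P3 := {p | p.rep 0 + p.rep 1 = 0 ∧ p.rep 2 + p.rep 3 = 0}

/-- The line `D₂ = {x₀ + x₂ = x₁ + ω x₃ = 0}`, `ω` a primitive 5th root of 1. -/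
def lineD2 (ω : ℂ) : Set P3 := {p | p.rep 0 + p.rep 2 = 0 ∧ p.rep 1 + ω * p.rep 3 = 0}

/-- The hyperplane section `C` of the Fermat quintic cut out (on `X`) by
`x₁⁵ + x₂⁵ + x₃⁵ = 0`. -/
def sectionC : Set P3 :=
  fermatQuintic ∩ {p | (p.rep 1) ^ 5 + (p.rep 2) ^ 5 + (p.rep 3) ^ 5 = 0}

/-- For a divisor `D = D₁ + D₂` which is the sum of two distinct reduced
irreducible curves, `1`-connectedness means exactly that `D₁.D₂ ≥ 1`,
i.e. that the two components meet. -/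
def OneConnectedPair (A B : Set P3) : Prop := (A ∩ B).Nonempty

lemma vec_ne_zero_of (v : Fin 4 → ℂ) (i : Fin 4) (h : v i ≠ 0) : v ≠ 0 :=
  fun hv => h (by rw [hv]; rfl)

lemma disj_aux (ω : ℂ) (hω : IsPrimitiveRoot ω 5) :
    ∀ p : P3, p ∈ lineD1 → p ∈ lineD2 ω → False := by
  intro p ⟨h1, h2⟩ ⟨h3, h4⟩
  have hω1 : ω ≠ 1 := hω.ne_one (by norm_num)
  have h0 : p.rep 0 = 0 := by
    have : (ω - 1) * p.rep 0 = 0 := by linear_combination h4 - h1 - ω * h2 + ω * h3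
    rcases mul_eq_zero.1 this with h | h
    · exact absurd (by linear_combination h) hω1
    · exact h
  have h1' : p.rep 1 = 0 := by linear_combination h1 + h0 - 2 * h0
  have h2' : p.rep 2 = 0 := by linear_combination h3 - h0 + 0*h0
  have h3' : p.rep 3 = 0 := by linear_combination h2 - h2'
  exact p.rep_nonzero (by funext i; fin_cases i <;> assumption)

/-- Example 2.1: the lines `D₁ = {x₀+x₁ = x₂+x₃ = 0}` and
`D₂ = {x₀+x₂ = x₁+ωx₃ = 0}` lie on the Fermat quintic `X`, are disjoint
(`D₁.D₂ = 0`), and each meets the hyperplane section `C` in degree `1`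
(in a single point); hence the divisor `D = D₁ + D₂` is not `1`-connected. -/
theorem stmt10 (ω : ℂ) (hω : IsPrimitiveRoot ω 5) :
    lineD1 ⊆ fermatQuintic ∧ lineD2 ω ⊆ fermatQuintic ∧
    lineD1 ∩ lineD2 ω = ∅ ∧
    (∃! p : P3, p ∈ lineD1 ∩ sectionC) ∧
    (∃! p : P3, p ∈ lineD2 ω ∩ sectionC) ∧
    ¬ OneConnectedPair lineD1 (lineD2 ω) := by
  have hω5 : ω ^ 5 = 1 := hω.pow_eq_one
  refine ⟨?_, ?_, ?_, ?_, ?_, ?_⟩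
  · rintro p ⟨h1, h2⟩
    show _ = _
    have e0 : p.rep 0 = -p.rep 1 := by linear_combination h1
    have e2 : p.rep 2 = -p.rep 3 := by linear_combination h2
    rw [e0, e2]; ring
  · rintro p ⟨h1, h2⟩
    show _ = _
    have e0 : p.rep 0 = -p.rep 2 := by linear_combination h1
    have e1 : p.rep 1 = -(ω * p.rep 3) := by linear_combination h2
    rw [e0, e1]
    linear_combination (-(p.rep 3 ^ 5)) * hω5
  · ext p
    simp only [Set.mem_inter_iff, Set.mem_empty_iff_false, iff_false, not_and]
    exact fun h1 h2 => disj_aux ω hω p h1 h2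
  · -- unique point of D1 ∩ C : [0:0:1:-1]
    set v : Fin 4 → ℂ := ![0, 0, 1, -1] with hv
    have hvne : v ≠ 0 := vec_ne_zero_of v 2 (by norm_num [hv, Matrix.cons_val_two, Matrix.cons_val_three])
    set q : P3 := Projectivization.mk ℂ v hvne with hq
    obtain ⟨a, ha⟩ := Projectivization.exists_smul_eq_mk_rep ℂ v hvne
    have hrep : ∀ i, q.rep i = (a : ℂ) * v i := by
      intro i; rw [← ha]; rfl
    refine ⟨q, ⟨⟨?_, ?_⟩, ⟨?_, ?_⟩⟩, ?_⟩
    · show _ = _; rw [hrep 0, hrep 1]; norm_num [hv]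
    · show _ = _; rw [hrep 2, hrep 3]; norm_num [hv, Matrix.cons_val_two, Matrix.cons_val_three]
    · show _ = _; rw [hrep 0, hrep 1, hrep 2, hrep 3]; norm_num [hv, Matrix.cons_val_two, Matrix.cons_val_three]; ring
    · show _ = _; rw [hrep 1, hrep 2, hrep 3]; norm_num [hv, Matrix.cons_val_two, Matrix.cons_val_three]; ring
    · rintro p ⟨⟨h1, h2⟩, ⟨_, h4⟩⟩
      -- p.rep 1 = 0, p.rep 0 = 0, p.rep 3 = -p.rep 2
      have e3 : p.rep 3 = -p.rep 2 := by linear_combination h2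
      have h4' : p.rep 1 ^ 5 + p.rep 2 ^ 5 + p.rep 3 ^ 5 = 0 := h4
      rw [e3] at h4'
      have e1 : p.rep 1 = 0 := by
        have h5 : p.rep 1 ^ 5 = 0 := by linear_combination h4'
        exact pow_eq_zero_iff (by norm_num) |>.1 h5
      have e0 : p.rep 0 = 0 := by linear_combination h1 - e1
      have e2 : p.rep 2 ≠ 0 := by
        intro h
        exact p.rep_nonzero (by
          funext i; fin_cases i
          · exact e0
          · exact e1
          · exact h
          · show p.rep 3 = 0; rw [e3, h]; simp)
      rw [← Projectivization.mk_rep p, hq]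
      rw [Projectivization.mk_eq_mk_iff']
      refine ⟨p.rep 2, ?_⟩
      funext i; fin_cases i <;>
        simp [hv, e0, e1, e3, Pi.smul_apply, smul_eq_mul]
  · -- unique point of D2 ∩ C : [0:-ω:0:1]
    set v : Fin 4 → ℂ := ![0, -ω, 0, 1] with hv
    have hvne : v ≠ 0 := vec_ne_zero_of v 3 (by norm_num [hv, Matrix.cons_val_two, Matrix.cons_val_three])
    set q : P3 := Projectivization.mk ℂ v hvne with hq
    obtain ⟨a, ha⟩ := Projectivization.exists_smul_eq_mk_rep ℂ v hvne
    have hrep : ∀ i, q.rep i = (a : ℂ) * v i := by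
      intro i; rw [← ha]; rfl
    refine ⟨q, ⟨⟨?_, ?_⟩, ⟨?_, ?_⟩⟩, ?_⟩
    · show _ = _; rw [hrep 0, hrep 2]; norm_num [hv, Matrix.cons_val_two, Matrix.cons_val_three]
    · show _ = _; rw [hrep 1, hrep 3]; norm_num [hv, Matrix.cons_val_two, Matrix.cons_val_three]; ring
    · show _ = _
      rw [hrep 0, hrep 1, hrep 2, hrep 3]
      norm_num [hv, Matrix.cons_val_two, Matrix.cons_val_three]
      linear_combination (-(a:ℂ)^5) * hω5
    · show _ = _
      rw [hrep 1, hrep 2, hrep 3]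
      norm_num [hv, Matrix.cons_val_two, Matrix.cons_val_three]
      linear_combination (-(a:ℂ)^5) * hω5
    · rintro p ⟨⟨h1, h2⟩, ⟨_, h4⟩⟩
      have e1 : p.rep 1 = -(ω * p.rep 3) := by linear_combination h2
      have h4' : p.rep 1 ^ 5 + p.rep 2 ^ 5 + p.rep 3 ^ 5 = 0 := h4
      rw [e1] at h4'
      have e2 : p.rep 2 = 0 := by
        have h5 : p.rep 2 ^ 5 = 0 := by
          linear_combination h4' + (p.rep 3 ^ 5) * hω5
        exact pow_eq_zero_iff (by norm_num) |>.1 h5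
      have e0 : p.rep 0 = 0 := by linear_combination h1 - e2
      have e3 : p.rep 3 ≠ 0 := by
        intro h
        exact p.rep_nonzero (by
          funext i; fin_cases i
          · exact e0
          · show p.rep 1 = 0; rw [e1, h]; simp
          · exact e2
          · exact h)
      rw [← Projectivization.mk_rep p, hq]
      rw [Projectivization.mk_eq_mk_iff']
      refine ⟨p.rep 3, ?_⟩
      funext i; fin_cases i <;>
        simp [hv, e0, e1, e2, Pi.smul_apply, smul_eq_mul] <;> ring
  · rintro ⟨p, h1, h2⟩
    exact disj_aux ω hω p h1 h2
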